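/- Dense set of good functions: if R(B) is a countable measure-preserving Borel equivalence relation on (B,ν) and the sequence F = {F_n} is asymptotically invariant with respect to a countable generating set Φ of inner automorphisms, then for every f ∈ L^∞(B) and every φ in the group generated by Φ, the averages A_n[F; f - f∘φ] converge pointwise a.e. to 0; moreover the linear span of the R(B)-invariant L² functions together with the functions f - f∘φ (f ∈ L^∞, φ ∈ ⟨Φ⟩) is dense in L²(B,ν). -/

import Mathlib

open MeasureTheory Filter
open scoped ENNReal BigOperators

/-- A countable Borel equivalence relation on a measurable space `B`. -/
structure CBER (B : Type*) [MeasurableSpace B] where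
  rel : B → B → Prop
  equivalence : Equivalence rel
  countable_classes : ∀ b, {b' | rel b b'}.Countable
  measurableSet_rel : MeasurableSet {p : B × B | rel p.1 p.2}

variable {B : Type*} [MeasurableSpace B]

/-- `ν` is `R`-invariant (`ν × c = c × ν` on `R`), via the mass-transport identity. -/
def CBER.Invariant (R : CBER B) (ν : Measure B) : Prop :=
  ∀ f : B → B → ℝ≥0∞, Measurable (Function.uncurry f) →
    ∫⁻ b, ∑' b' : {x // R.rel b x}, f b b' ∂ν =
      ∫⁻ b, ∑' b' : {x // R.rel b x}, f (b' : B) b ∂ν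

/-- A Borel sequence of finite-subset-valued maps with graphs contained in `R`. -/
def CBER.AdaptedSeq (R : CBER B) (F : ℕ → B → Finset B) : Prop :=
  (∀ n, MeasurableSet {p : B × B | p.2 ∈ F n p.1}) ∧
  ∀ n b b', b' ∈ F n b → R.rel b b'

/-- Inner automorphisms of `R`: Borel bijections whose graph is contained in `R`. -/
def innerAuts (R : CBER B) : Set (Equiv.Perm B) :=
  {φ | Measurable φ ∧ Measurable φ.symm ∧ ∀ b, R.rel b (φ b)}

/-- `Φ` generates `R` (mod `ν`). -/
def Generating (R : CBER B) (Φ : Set (Equiv.Perm B)) (ν : Measure B) : Prop :=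
  ∀ᵐ b ∂ν, ∀ b', R.rel b b' → ∃ φ ∈ Subgroup.closure Φ, φ b = b'


section Aux

set_option linter.unusedSectionVars false
set_option linter.unusedVariables false

lemma countable_closure_perm {G : Type*} [Group G] {Φ : Set G} (h : Φ.Countable) :
    (Subgroup.closure Φ : Set G).Countable := by
  haveI := h.to_subtype
  haveI : Countable (FreeGroup Φ) := by unfold FreeGroup; infer_instance
  have : (Subgroup.closure Φ : Set G) = Set.range (FreeGroup.lift (Subtype.val : Φ → G)) := by
    rw [← MonoidHom.coe_range, FreeGroup.range_lift_eq_closure, Subtype.range_coe_subtype,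
      Set.setOf_mem_eq]
  rw [this]
  exact Set.countable_range _

lemma ai_closure [DecidableEq B] (ν : Measure B) (F : ℕ → B → Finset B)
    (Φ : Set (Equiv.Perm B))
    (hai : ∀ φ ∈ Φ, ∀ᵐ b ∂ν,
      Tendsto (fun n => ((symmDiff (F n b) ((F n b).image φ)).card : ℝ) / ((F n b).card : ℝ))
        atTop (nhds 0)) :
    ∀ φ ∈ Subgroup.closure Φ, ∀ᵐ b ∂ν,
      Tendsto (fun n => ((symmDiff (F n b) ((F n b).image φ)).card : ℝ) / ((F n b).card : ℝ))
        atTop (nhds 0) := by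
  intro φ hφ
  induction hφ using Subgroup.closure_induction with
  | mem x hx => exact hai x hx
  | one =>
    filter_upwards with b
    have : (fun n => ((symmDiff (F n b) ((F n b).image ((1 : Equiv.Perm B)))).card : ℝ)
        / ((F n b).card : ℝ)) = fun _ => 0 := by
      funext n
      simp [Finset.image_id, symmDiff_self]
    rw [this]; exact tendsto_const_nhds
  | mul x y hx hy ihx ihy =>
    filter_upwards [ihx, ihy] with b h1 h2
    have key : ∀ n, ((symmDiff (F n b) ((F n b).image (x*y))).card : ℝ) / ((F n b).card : ℝ)
        ≤ ((symmDiff (F n b) ((F n b).image x)).card : ℝ) / ((F n b).card : ℝ)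
          + ((symmDiff (F n b) ((F n b).image y)).card : ℝ) / ((F n b).card : ℝ) := by
      intro n
      set s := F n b with hs
      rcases eq_or_ne s ∅ with h | h
      · simp [h]
      have hc : (0:ℝ) < (s.card : ℝ) := by
        have := Finset.card_pos.2 (Finset.nonempty_of_ne_empty h)
        exact_mod_cast this
      rw [← add_div, div_le_div_iff_of_pos_right hc]
      have himg : s.image ⇑(x*y) = (s.image ⇑y).image ⇑x := by
        rw [Finset.image_image, Equiv.Perm.coe_mul]
      have htri : symmDiff s (s.image ⇑(x*y)) ⊆
          symmDiff s (s.image ⇑x) ∪ symmDiff (s.image ⇑x) ((s.image ⇑y).image ⇑x) := by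
        rw [himg]
        exact symmDiff_triangle s (s.image ⇑x) ((s.image ⇑y).image ⇑x)
      calc ((symmDiff s (s.image ⇑(x*y))).card : ℝ)
          ≤ ((symmDiff s (s.image ⇑x) ∪ symmDiff (s.image ⇑x) ((s.image ⇑y).image ⇑x)).card : ℝ) := by
            exact_mod_cast Finset.card_le_card htri
        _ ≤ ((symmDiff s (s.image ⇑x)).card : ℝ)
            + ((symmDiff (s.image ⇑x) ((s.image ⇑y).image ⇑x)).card : ℝ) := by
            exact_mod_cast Finset.card_union_le _ _
        _ = ((symmDiff s (s.image ⇑x)).card : ℝ) + ((symmDiff s (s.image ⇑y)).card : ℝ) := by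
            rw [← Finset.image_symmDiff _ _ (Equiv.injective x),
              Finset.card_image_of_injective _ (Equiv.injective x)]
    have nonneg : ∀ n,
        0 ≤ ((symmDiff (F n b) ((F n b).image (x*y))).card : ℝ) / ((F n b).card : ℝ) :=
      fun n => div_nonneg (Nat.cast_nonneg _) (Nat.cast_nonneg _)
    have := h1.add h2
    rw [add_zero] at this
    exact squeeze_zero nonneg key this
  | inv x hx ih =>
    filter_upwards [ih] with b h1
    have : (fun n => ((symmDiff (F n b) ((F n b).image (x⁻¹ : Equiv.Perm B))).card : ℝ)
        / ((F n b).card : ℝ))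
        = fun n => ((symmDiff (F n b) ((F n b).image x)).card : ℝ) / ((F n b).card : ℝ) := by
      funext n
      set s := F n b
      congr 1
      have : symmDiff s (s.image ⇑x) = (symmDiff s (s.image ⇑(x⁻¹))).image ⇑x := by
        rw [Finset.image_symmDiff _ _ (Equiv.injective x), Finset.image_image]
        have : ⇑x ∘ ⇑(x⁻¹ : Equiv.Perm B) = id := by
          funext z; simp
        rw [this, Finset.image_id, symmDiff_comm]
      rw [this, Finset.card_image_of_injective _ (Equiv.injective x)]
    rw [this]; exact h1

lemma avg_bound' [DecidableEq B] (f : B → ℝ) (C : ℝ) (hC0 : 0 ≤ C) (hC : ∀ b, |f b| ≤ C)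
    (φ : Equiv.Perm B) (s : Finset B) :
    |((s.card : ℝ))⁻¹ * ∑ b' ∈ s, (f b' - f (φ b'))|
      ≤ C * (((symmDiff s (s.image ⇑φ)).card : ℝ) / (s.card : ℝ)) := by
  set t := s.image ⇑φ with ht
  rcases eq_or_ne s ∅ with h | h
  · simp [h, ht, symmDiff_self]
  have hc : (0:ℝ) < (s.card : ℝ) := by
    exact_mod_cast Finset.card_pos.2 (Finset.nonempty_of_ne_empty h)
  have hsum : ∑ b' ∈ s, (f b' - f (φ b')) = (∑ b' ∈ s \ t, f b') - ∑ b' ∈ t \ s, f b' := by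
    rw [Finset.sum_sub_distrib]
    have h2 : ∑ b' ∈ s, f (φ b') = ∑ b' ∈ t, f b' := by
      rw [ht, Finset.sum_image (fun x _ y _ h => Equiv.injective φ h)]
    rw [h2, ← Finset.sum_inter_add_sum_sdiff s t f, ← Finset.sum_inter_add_sum_sdiff t s f,
      Finset.inter_comm]
    ring
  have habs : ∀ u : Finset B, |∑ b' ∈ u, f b'| ≤ C * u.card := by
    intro u
    calc |∑ b' ∈ u, f b'| ≤ ∑ b' ∈ u, |f b'| := Finset.abs_sum_le_sum_abs _ _
      _ ≤ ∑ _b' ∈ u, C := Finset.sum_le_sum (fun i _ => hC i)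
      _ = C * u.card := by rw [Finset.sum_const, nsmul_eq_mul]; ring
  have hcard : ((s \ t).card : ℝ) + ((t \ s).card : ℝ) = ((symmDiff s t).card : ℝ) := by
    rw [symmDiff_def]
    have : (s \ t ⊔ t \ s).card = (s \ t).card + (t \ s).card :=
      Finset.card_union_of_disjoint (disjoint_sdiff_sdiff)
    rw [this]; push_cast; ring
  rw [abs_mul, abs_inv, abs_of_nonneg (Nat.cast_nonneg _), hsum, inv_mul_eq_div,
    div_le_iff₀ hc, mul_assoc, div_mul_cancel₀ _ (ne_of_gt hc), ← hcard]
  calc |(∑ b' ∈ s \ t, f b') - ∑ b' ∈ t \ s, f b'|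
      ≤ |∑ b' ∈ s \ t, f b'| + |∑ b' ∈ t \ s, f b'| := abs_sub _ _
    _ ≤ C * ((s \ t).card : ℝ) + C * ((t \ s).card : ℝ) := add_le_add (habs _) (habs _)
    _ = C * (((s \ t).card : ℝ) + ((t \ s).card : ℝ)) := by ring

/-- The indicator of a set, as a real function. -/
noncomputable def chi (A : Set B) : B → ℝ := A.indicator (fun _ => (1:ℝ))

lemma null_of_setIntegral (ν : Measure B) (r : B → ℝ) (hri : Integrable r ν)
    (S : Set B) (hS : MeasurableSet S) (hpos : ∀ b ∈ S, 0 < r b)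
    (hint : ∫ b in S, r b ∂ν ≤ 0) : ν S = 0 := by
  set w := S.indicator r with hw
  have hw0 : ∀ b, 0 ≤ w b := by
    intro b
    classical
    rw [hw, Set.indicator_apply]
    split_ifs with h
    · exact le_of_lt (hpos b h)
    · exact le_rfl
  have hwi : Integrable w ν := hri.indicator hS
  have hzero : ∫ b, w b ∂ν = 0 := by
    have h1 : ∫ b, w b ∂ν = ∫ b in S, r b ∂ν := integral_indicator hS
    have h2 : 0 ≤ ∫ b, w b ∂ν := integral_nonneg hw0
    linarith [h1 ▸ hint]
  have := (integral_eq_zero_iff_of_nonneg hw0 hwi).1 hzero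
  have hnull : ν {b | w b ≠ 0} = 0 := by
    rw [Filter.EventuallyEq, ae_iff] at this
    simpa using this
  apply measure_mono_null _ hnull
  intro b hb
  simp only [Set.mem_setOf_eq]
  rw [hw, Set.indicator_of_mem hb]
  exact ne_of_gt (hpos b hb)

lemma mul_chi (r : B → ℝ) (A : Set B) : (fun b => r b * chi A b) = A.indicator r := by
  classical
  funext b
  rw [chi, Set.indicator_apply, Set.indicator_apply]
  split_ifs <;> simp

lemma chi_comp (A : Set B) (ψ : Equiv.Perm B) : (fun b => chi A (ψ b)) = chi (⇑ψ ⁻¹' A) := by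
  classical
  funext b
  rw [chi, chi, Set.indicator_apply, Set.indicator_apply]
  exact if_congr (Iff.symm (Set.mem_preimage)) rfl rfl

lemma meas_closure (Φ : Set (Equiv.Perm B))
    (hΦi : ∀ φ ∈ Φ, Measurable ⇑φ ∧ Measurable ⇑φ.symm) :
    ∀ ψ ∈ Subgroup.closure Φ, Measurable ⇑ψ ∧ Measurable ⇑ψ.symm := by
  intro ψ hψ
  induction hψ using Subgroup.closure_induction with
  | mem x hx => exact hΦi x hx
  | one => exact ⟨measurable_id, measurable_id⟩
  | mul x y hx hy ihx ihy =>
    constructor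
    · rw [Equiv.Perm.coe_mul]; exact ihx.1.comp ihy.1
    · have : ⇑(x*y).symm = ⇑y.symm ∘ ⇑x.symm := by funext b; rfl
      rw [this]; exact ihy.2.comp ihx.2
  | inv x hx ih => exact ⟨ih.2, ih.1⟩

lemma key (R : CBER B) (ν : Measure B) [IsProbabilityMeasure ν]
    (Φ : Set (Equiv.Perm B)) (hΦc : Φ.Countable)
    (hΦi : ∀ φ ∈ Φ, Measurable ⇑φ ∧ Measurable ⇑φ.symm)
    (hgen : Generating R Φ ν)
    (r : B → ℝ) (hrm : Measurable r) (hri : Integrable r ν)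
    (h1 : ∀ A : Set B, MeasurableSet A → ∀ ψ ∈ Subgroup.closure Φ,
      ∫ b, r b * (chi A b - chi A (ψ b)) ∂ν = 0)
    (h2 : ∀ A : Set B, MeasurableSet A →
      (∀ᵐ b ∂ν, ∀ b', R.rel b b' → chi A b = chi A b') →
      ∫ b, r b * chi A b ∂ν = 0) :
    ∀ᵐ b ∂ν, r b ≤ 0 := by
  classical
  set G : Set (Equiv.Perm B) :=
    ((Subgroup.closure Φ : Subgroup (Equiv.Perm B)) : Set (Equiv.Perm B)) with hG
  have hGc : G.Countable := countable_closure_perm hΦc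
  set P : Set B := {b | 0 < r b} with hP
  have hPm : MeasurableSet P := measurableSet_lt measurable_const hrm
  have step1 : ∀ ψ ∈ Subgroup.closure Φ, ν (P ∩ ⇑ψ ⁻¹' Pᶜ) = 0 := by
    intro ψ hψ
    have hψm := (meas_closure Φ hΦi ψ hψ).1
    have heq : ∫ b, r b * chi Pᶜ b ∂ν = ∫ b, r b * chi Pᶜ (ψ b) ∂ν := by
      have := h1 Pᶜ hPm.compl ψ hψ
      have hi1 : Integrable (fun b => r b * chi Pᶜ b) ν := by
        rw [mul_chi]; exact hri.indicator hPm.compl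
      have hi2 : Integrable (fun b => r b * chi Pᶜ (ψ b)) ν := by
        have h' : (fun b => r b * chi Pᶜ (ψ b)) = (fun b => r b * chi (⇑ψ ⁻¹' Pᶜ) b) := by
          rw [← chi_comp]
        rw [h', mul_chi]
        exact hri.indicator (hψm hPm.compl)
      have hsub : (fun b => r b * (chi Pᶜ b - chi Pᶜ (ψ b)))
          = fun b => r b * chi Pᶜ b - r b * chi Pᶜ (ψ b) := by funext b; ring
      rw [hsub] at this
      rw [integral_sub hi1 hi2] at this
      linarith
    have hq : ⇑ψ ⁻¹' Pᶜ = (P ∩ ⇑ψ ⁻¹' Pᶜ) ∪ (Pᶜ ∩ ⇑ψ ⁻¹' Pᶜ) := by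
      rw [← Set.union_inter_distrib_right, Set.union_compl_self, Set.univ_inter]
    have hq2 : Pᶜ = (Pᶜ ∩ ⇑ψ ⁻¹' Pᶜ) ∪ (Pᶜ ∩ ⇑ψ ⁻¹' P) := by
      rw [← Set.inter_union_distrib_left, ← Set.preimage_union, Set.compl_union_self,
        Set.preimage_univ, Set.inter_univ]
    have e1 : ∫ b, r b * chi Pᶜ b ∂ν = ∫ b in Pᶜ, r b ∂ν := by
      rw [mul_chi]; exact integral_indicator hPm.compl
    have e2 : ∫ b, r b * chi Pᶜ (ψ b) ∂ν = ∫ b in ⇑ψ ⁻¹' Pᶜ, r b ∂ν := by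
      have h' : (fun b => r b * chi Pᶜ (ψ b)) = (fun b => r b * chi (⇑ψ ⁻¹' Pᶜ) b) := by
        rw [← chi_comp]
      rw [h', mul_chi]; exact integral_indicator (hψm hPm.compl)
    have hd1 : Disjoint (P ∩ ⇑ψ ⁻¹' Pᶜ) (Pᶜ ∩ ⇑ψ ⁻¹' Pᶜ) :=
      Disjoint.mono Set.inter_subset_left Set.inter_subset_left disjoint_compl_right
    have hd2 : Disjoint (Pᶜ ∩ ⇑ψ ⁻¹' Pᶜ) (Pᶜ ∩ ⇑ψ ⁻¹' P) := by
      apply Disjoint.mono Set.inter_subset_right Set.inter_subset_right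
      exact Disjoint.preimage _ disjoint_compl_left
    have m1 : MeasurableSet (P ∩ ⇑ψ ⁻¹' Pᶜ) := hPm.inter (hψm hPm.compl)
    have m2 : MeasurableSet (Pᶜ ∩ ⇑ψ ⁻¹' Pᶜ) := hPm.compl.inter (hψm hPm.compl)
    have m3 : MeasurableSet (Pᶜ ∩ ⇑ψ ⁻¹' P) := hPm.compl.inter (hψm hPm)
    have s1 : ∫ b in ⇑ψ ⁻¹' Pᶜ, r b ∂ν
        = ∫ b in P ∩ ⇑ψ ⁻¹' Pᶜ, r b ∂ν + ∫ b in Pᶜ ∩ ⇑ψ ⁻¹' Pᶜ, r b ∂ν := by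
      rw [← setIntegral_union hd1 m2 hri.integrableOn hri.integrableOn, ← hq]
    have s2 : ∫ b in Pᶜ, r b ∂ν
        = ∫ b in Pᶜ ∩ ⇑ψ ⁻¹' Pᶜ, r b ∂ν + ∫ b in Pᶜ ∩ ⇑ψ ⁻¹' P, r b ∂ν := by
      rw [← setIntegral_union hd2 m3 hri.integrableOn hri.integrableOn, ← hq2]
    have hS3 : ∫ b in Pᶜ ∩ ⇑ψ ⁻¹' P, r b ∂ν ≤ 0 := by
      apply setIntegral_nonpos m3
      intro b hb
      have : b ∈ Pᶜ := hb.1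
      simpa [hP, not_lt] using this
    have : ∫ b in P ∩ ⇑ψ ⁻¹' Pᶜ, r b ∂ν ≤ 0 := by
      rw [e1, e2, s1, s2] at heq
      linarith
    exact null_of_setIntegral ν r hri _ m1 (fun b hb => hb.1) this
  set Abar : Set B := ⋂ ψ ∈ G, ⇑ψ ⁻¹' P with hAbar
  have hAm : MeasurableSet Abar :=
    MeasurableSet.biInter hGc (fun ψ hψ => (meas_closure Φ hΦi ψ hψ).1 hPm)
  have hmemA : ∀ b, b ∈ Abar ↔ ∀ ψ ∈ Subgroup.closure Φ, ψ b ∈ P := by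
    intro b
    simp [hAbar, hG, Set.mem_iInter]
  have hsubP : Abar ⊆ P := by
    intro b hb
    have := (hmemA b).1 hb 1 (Subgroup.one_mem _)
    simpa using this
  have hnullPA : ν (P \ Abar) = 0 := by
    have hUnull : ν (⋃ ψ ∈ G, P ∩ ⇑ψ ⁻¹' Pᶜ) = 0 :=
      (measure_biUnion_null_iff hGc).2 (fun ψ hψ => step1 ψ hψ)
    refine measure_mono_null ?_ hUnull
    intro b hb
    rcases hb with ⟨hbP, hbA⟩
    rw [hmemA] at hbA
    push_neg at hbA
    rcases hbA with ⟨ψ, hψ, hψb⟩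
    exact Set.mem_biUnion hψ ⟨hbP, hψb⟩
  have hinv : ∀ᵐ b ∂ν, ∀ b', R.rel b b' → chi Abar b = chi Abar b' := by
    filter_upwards [hgen] with b hb b' hrel
    rcases hb b' hrel with ⟨ψ₀, hψ₀, rfl⟩
    have hiff : b ∈ Abar ↔ ψ₀ b ∈ Abar := by
      rw [hmemA, hmemA]
      constructor
      · intro h ψ hψ
        have := h (ψ * ψ₀) (Subgroup.mul_mem _ hψ hψ₀)
        simpa [Equiv.Perm.mul_apply] using this
      · intro h ψ hψ
        have := h (ψ * ψ₀⁻¹) (Subgroup.mul_mem _ hψ (Subgroup.inv_mem _ hψ₀))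
        simpa [Equiv.Perm.mul_apply] using this
    rw [chi, Set.indicator_apply, Set.indicator_apply]
    exact if_congr hiff rfl rfl
  have h0 : ∫ b, r b * chi Abar b ∂ν = 0 := h2 Abar hAm hinv
  have hPint : ∫ b in P, r b ∂ν ≤ 0 := by
    have e3 : ∫ b, r b * chi Abar b ∂ν = ∫ b in Abar, r b ∂ν := by
      rw [mul_chi]; exact integral_indicator hAm
    have e4 : ∫ b in Abar, r b ∂ν = ∫ b in P, r b ∂ν := by
      apply setIntegral_congr_set
      rw [MeasureTheory.ae_eq_set]
      constructor
      · apply measure_mono_null (Set.diff_subset_diff_left hsubP); simp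
      · exact hnullPA
    linarith [e3 ▸ h0, e4]
  have hPnull : ν P = 0 := null_of_setIntegral ν r hri P hPm (fun b hb => hb) hPint
  rw [ae_iff]
  convert hPnull using 2
  simp [hP, not_le]

end Aux

/-- Dense set of good functions: if `F` is asymptotically invariant with respect to a
countable generating set `Φ` of inner automorphisms, then (1) for every `f ∈ L^∞(B)` and
every `φ ∈ ⟨Φ⟩` the averages `A_n[F; f - f∘φ]` converge pointwise a.e. to `0`; and (2) the
linear span of the `R`-invariant `L²` functions together with the coboundaries `f - f∘φ`
(`f ∈ L^∞`, `φ ∈ ⟨Φ⟩`) is dense in `L²(B,ν)`. -/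


theorem dense_good_functions [DecidableEq B] (R : CBER B) (ν : Measure B)
    [IsProbabilityMeasure ν] (hinv : R.Invariant ν)
    (F : ℕ → B → Finset B) (hF : R.AdaptedSeq F)
    (Φ : Set (Equiv.Perm B)) (hΦc : Φ.Countable) (hΦi : Φ ⊆ innerAuts R)
    (hgen : Generating R Φ ν)
    (hai : ∀ φ ∈ Φ, ∀ᵐ b ∂ν,
      Tendsto (fun n => ((symmDiff (F n b) ((F n b).image φ)).card : ℝ) / ((F n b).card : ℝ))
        atTop (nhds 0)) :
    (∀ f : B → ℝ, Measurable f → (∃ C, ∀ b, |f b| ≤ C) → ∀ φ ∈ Subgroup.closure Φ,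
      ∀ᵐ b ∂ν,
        Tendsto (fun n => (((F n b).card : ℝ))⁻¹ * ∑ b' ∈ F n b, (f b' - f (φ b')))
          atTop (nhds 0)) ∧
    (∀ f : B → ℝ, MemLp f 2 ν → ∀ ε : ℝ, 0 < ε →
      ∃ h ∈ Submodule.span ℝ
          ({g : B → ℝ | MemLp g 2 ν ∧ ∀ᵐ b ∂ν, ∀ b', R.rel b b' → g b = g b'} ∪
           {g : B → ℝ | ∃ f₀ : B → ℝ, ∃ φ ∈ Subgroup.closure Φ,
              Measurable f₀ ∧ (∃ C, ∀ b, |f₀ b| ≤ C) ∧ g = fun b => f₀ b - f₀ (φ b)}),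
        eLpNorm (f - h) 2 ν < ENNReal.ofReal ε) := by
  classical
  have hΦi' : ∀ φ ∈ Φ, Measurable ⇑φ ∧ Measurable ⇑φ.symm :=
    fun φ hφ => ⟨(hΦi hφ).1, (hΦi hφ).2.1⟩
  constructor
  · -- part (1)
    rintro f hfm ⟨C, hC⟩ φ hφ
    have hcl := ai_closure ν F Φ hai φ hφ
    filter_upwards [hcl] with b hb
    apply squeeze_zero_norm
      (a := fun n => (max C 0) *
        (((symmDiff (F n b) ((F n b).image ⇑φ)).card : ℝ) / ((F n b).card : ℝ)))
    · intro n
      rw [Real.norm_eq_abs]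
      exact avg_bound' f (max C 0) (le_max_right _ _)
        (fun b' => le_trans (hC b') (le_max_left _ _)) φ (F n b)
    · have := hb.const_mul (max C 0)
      simpa using this
  · -- part (2)
    intro f hf ε hε
    set Sfun : Set (B → ℝ) :=
        ({g : B → ℝ | MemLp g 2 ν ∧ ∀ᵐ b ∂ν, ∀ b', R.rel b b' → g b = g b'} ∪
         {g : B → ℝ | ∃ f₀ : B → ℝ, ∃ φ ∈ Subgroup.closure Φ,
            Measurable f₀ ∧ (∃ C, ∀ b, |f₀ b| ≤ C) ∧ g = fun b => f₀ b - f₀ (φ b)}) with hSfun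
    have hmemLp : ∀ g ∈ Sfun, MemLp g 2 ν := by
      intro g hg
      rcases hg with hg | ⟨f₀, φ, hφ, hf₀m, ⟨C, hC⟩, rfl⟩
      · exact hg.1
      · have hφm := (meas_closure Φ hΦi' φ hφ).1
        apply MemLp.of_bound ((hf₀m.sub (hf₀m.comp hφm)).aestronglyMeasurable) (2 * C)
        filter_upwards with b
        rw [Real.norm_eq_abs]
        calc |f₀ b - f₀ (φ b)| ≤ |f₀ b| + |f₀ (φ b)| := abs_sub _ _
          _ ≤ C + C := add_le_add (hC b) (hC _)
          _ = 2*C := by ring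
    set S' : Set (Lp ℝ 2 ν) := {y | ∃ g, ∃ hg : g ∈ Sfun, y = ((hmemLp g hg).toLp g)} with hS'
    set M := (Submodule.span ℝ S').topologicalClosure with hM
    haveI : CompleteSpace M := (Submodule.isClosed_topologicalClosure _).completeSpace_coe
    obtain ⟨y, hy, z, hz, hdecomp⟩ := Submodule.exists_add_mem_mem_orthogonal (K := M) (hf.toLp f)
    have hzm : Measurable (⇑z : B → ℝ) := (Lp.stronglyMeasurable z).measurable
    have hzint : Integrable (⇑z : B → ℝ) ν :=
      (Lp.memLp z).integrable (by norm_num)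
    have horth : ∀ g, ∀ hg : g ∈ Sfun, ∫ b, (z : B → ℝ) b * g b ∂ν = 0 := by
      intro g hg
      have hmem : ((hmemLp g hg).toLp g) ∈ M :=
        Submodule.le_topologicalClosure _ (Submodule.subset_span ⟨g, hg, rfl⟩)
      have hzero := (Submodule.mem_orthogonal M z).1 hz _ hmem
      rw [MeasureTheory.L2.inner_def] at hzero
      have hre : ∫ b, (((hmemLp g hg).toLp g : Lp ℝ 2 ν) : B → ℝ) b * (z : B → ℝ) b ∂ν = 0 := by
        rw [← hzero]
        apply integral_congr_ae
        filter_upwards with b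
        simp [RCLike.inner_apply, mul_comm]
      rw [← hre]
      apply integral_congr_ae
      filter_upwards [(hmemLp g hg).coeFn_toLp] with b hb
      rw [hb, mul_comm]
    have h1 : ∀ A : Set B, MeasurableSet A → ∀ ψ ∈ Subgroup.closure Φ,
        ∫ b, (z : B → ℝ) b * (chi A b - chi A (ψ b)) ∂ν = 0 := by
      intro A hA ψ hψ
      apply horth
      rw [hSfun]
      right
      refine ⟨chi A, ψ, hψ, measurable_const.indicator hA, ⟨1, ?_⟩, rfl⟩
      intro b
      simp only [chi, Set.indicator_apply]
      split_ifs <;> simp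
    have h2 : ∀ A : Set B, MeasurableSet A →
        (∀ᵐ b ∂ν, ∀ b', R.rel b b' → chi A b = chi A b') →
        ∫ b, (z : B → ℝ) b * chi A b ∂ν = 0 := by
      intro A hA hAi
      apply horth
      rw [hSfun]
      left
      refine ⟨?_, hAi⟩
      apply MemLp.of_bound ((measurable_const.indicator hA).aestronglyMeasurable) 1
      filter_upwards with b
      rw [Real.norm_eq_abs]
      simp only [chi, Set.indicator_apply]
      split_ifs <;> simp
    have k1 : ∀ᵐ b ∂ν, (z : B → ℝ) b ≤ 0 := key R ν Φ hΦc hΦi' hgen _ hzm hzint h1 h2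
    have k2 : ∀ᵐ b ∂ν, -(z : B → ℝ) b ≤ 0 := by
      apply key R ν Φ hΦc hΦi' hgen (fun b => -(z : B → ℝ) b) hzm.neg hzint.neg
      · intro A hA ψ hψ
        have := h1 A hA ψ hψ
        have heq : (fun b => -(z : B → ℝ) b * (chi A b - chi A (ψ b)))
            = fun b => -((z : B → ℝ) b * (chi A b - chi A (ψ b))) := by funext b; ring
        rw [heq, integral_neg, this, neg_zero]
      · intro A hA hAi
        have := h2 A hA hAi
        have heq : (fun b => -(z : B → ℝ) b * chi A b)
            = fun b => -((z : B → ℝ) b * chi A b) := by funext b; ring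
        rw [heq, integral_neg, this, neg_zero]
    have hz0 : (⇑z : B → ℝ) =ᵐ[ν] 0 := by
      filter_upwards [k1, k2] with b hb1 hb2
      have : 0 ≤ (z : B → ℝ) b := by linarith
      exact le_antisymm hb1 this
    have hzzero : z = 0 := by
      have : ‖z‖ = 0 := by
        rw [Lp.norm_def, eLpNorm_congr_ae hz0, eLpNorm_zero, ENNReal.toReal_zero]
      exact norm_eq_zero.1 this
    have hfM : (hf.toLp f) ∈ closure ((Submodule.span ℝ S' : Submodule ℝ (Lp ℝ 2 ν))
        : Set (Lp ℝ 2 ν)) := by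
      rw [← Submodule.topologicalClosure_coe]
      have : hf.toLp f = y := by rw [hdecomp, hzzero, add_zero]
      rw [this]
      exact hy
    obtain ⟨h', hh'mem, hh'close⟩ := Metric.mem_closure_iff.1 hfM ε hε
    have transfer : ∀ y' ∈ Submodule.span ℝ S', ∃ hh : B → ℝ,
        hh ∈ Submodule.span ℝ Sfun ∧ ((⇑y' : B → ℝ) =ᵐ[ν] hh) := by
      intro y' hy'
      induction hy' using Submodule.span_induction with
      | mem x hx =>
        rcases hx with ⟨g, hg, rfl⟩
        exact ⟨g, Submodule.subset_span hg, (hmemLp g hg).coeFn_toLp⟩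
      | zero =>
        refine ⟨0, Submodule.zero_mem _, ?_⟩
        exact Lp.coeFn_zero ℝ 2 ν
      | add u v hu hv ihu ihv =>
        rcases ihu with ⟨hu', hu'mem, hu'ae⟩
        rcases ihv with ⟨hv', hv'mem, hv'ae⟩
        refine ⟨hu' + hv', Submodule.add_mem _ hu'mem hv'mem, ?_⟩
        filter_upwards [Lp.coeFn_add u v, hu'ae, hv'ae] with b e1 e2 e3
        simp only [e1, Pi.add_apply, e2, e3]
      | smul c u hu ihu =>
        rcases ihu with ⟨hu', hu'mem, hu'ae⟩
        refine ⟨c • hu', Submodule.smul_mem _ c hu'mem, ?_⟩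
        filter_upwards [Lp.coeFn_smul c u, hu'ae] with b e1 e2
        simp only [e1, Pi.smul_apply, e2]
    obtain ⟨hh, hhmem, hhae⟩ := transfer h' hh'mem
    refine ⟨hh, hhmem, ?_⟩
    have hae : (f - hh) =ᵐ[ν] ⇑((hf.toLp f) - h') := by
      have e1 : ⇑((hf.toLp f) - h') =ᵐ[ν] ⇑(hf.toLp f) - ⇑h' := Lp.coeFn_sub _ _
      filter_upwards [e1, hf.coeFn_toLp, hhae] with b e1b e2b e3b
      simp only [Pi.sub_apply, e1b, e2b, ← e3b]
    rw [eLpNorm_congr_ae hae]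
    have hlt : ‖(hf.toLp f) - h'‖ < ε := by
      rw [← dist_eq_norm]; exact hh'close
    have hfin : eLpNorm (⇑((hf.toLp f) - h')) 2 ν = ENNReal.ofReal ‖(hf.toLp f) - h'‖ := by
      rw [Lp.norm_def, ENNReal.ofReal_toReal (Lp.eLpNorm_ne_top _)]
    rw [hfin]
    exact (ENNReal.ofReal_lt_ofReal_iff hε).2 hlt
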